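/- Let d ≥ 3, n ≥ 3d-2, and let S ⊆ {1,...,n} be a set of size d-1 with |S ∩ {1,...,2k-2}| ≤ k-1 for all 2 ≤ k ≤ d. Then there exists a set M ⊆ {1,...,n} with S ⊆ M, |M| = 2d-1, and |M ∩ {1,...,2k-2}| ≤ k-1 for all 2 ≤ k ≤ d. -/
import Mathlib

/-- Extract the `d` largest elements of a finite set of naturals. -/
lemma exists_top_subset : ∀ (d : ℕ) (C : Finset ℕ), d ≤ C.card →
    ∃ T, T ⊆ C ∧ T.card = d ∧ ∀ x ∈ T, ∀ y ∈ C \ T, y < x := by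
  intro d
  induction d with
  | zero => exact fun C _ => ⟨∅, by simp⟩
  | succ d ih =>
    intro C hC
    have hne : C.Nonempty := Finset.card_pos.mp (by omega)
    set m := C.max' hne with hm
    have hmmem : m ∈ C := C.max'_mem hne
    obtain ⟨T', hT'sub, hT'card, hT'⟩ := ih (C.erase m)
      (by rw [Finset.card_erase_of_mem hmmem]; omega)
    have hmT' : m ∉ T' := fun h => (Finset.mem_erase.mp (hT'sub h)).1 rfl
    refine ⟨insert m T', ?_, ?_, ?_⟩
    · intro x hx
      rcases Finset.mem_insert.mp hx with h | h
      · exact h ▸ hmmem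
      · exact Finset.mem_of_mem_erase (hT'sub h)
    · rw [Finset.card_insert_of_notMem hmT', hT'card]
    · intro x hx y hy
      have hyC : y ∈ C := (Finset.mem_sdiff.mp hy).1
      have hynotins : y ∉ insert m T' := (Finset.mem_sdiff.mp hy).2
      rcases Finset.mem_insert.mp hx with h | h
      · subst h
        have hyne : y ≠ m := fun h => hynotins (h ▸ Finset.mem_insert_self m T')
        exact lt_of_le_of_ne (C.le_max' y hyC) hyne
      · apply hT' x h y
        rw [Finset.mem_sdiff, Finset.mem_erase]
        refine ⟨⟨fun h => hynotins (h ▸ Finset.mem_insert_self m T'), hyC⟩,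
          fun h => hynotins (Finset.mem_insert_of_mem h)⟩

theorem good_subset_extend_to_large (d : ℕ) (hd : 3 ≤ d) (n : ℕ) (hn : 3 * d - 2 ≤ n)
    (S : Finset ℕ) (hS : S ⊆ Finset.Icc 1 n) (hScard : S.card = d - 1)
    (hgood : ∀ k, 2 ≤ k → k ≤ d → (S ∩ Finset.Icc 1 (2 * k - 2)).card ≤ k - 1) :
    ∃ M : Finset ℕ, M ⊆ Finset.Icc 1 n ∧ S ⊆ M ∧ M.card = 2 * d - 1 ∧
      ∀ k, 2 ≤ k → k ≤ d → (M ∩ Finset.Icc 1 (2 * k - 2)).card ≤ k - 1 := by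
  set C := Finset.Icc 1 n \ S with hC
  have hIcard : (Finset.Icc 1 n).card = n := by rw [Nat.card_Icc]; omega
  have hCcard : d ≤ C.card := by
    rw [hC, Finset.card_sdiff_of_subset hS, hIcard, hScard]; omega
  obtain ⟨T, hTsub, hTcard, hTtop⟩ := exists_top_subset d C hCcard
  have hTIcc : T ⊆ Finset.Icc 1 n := fun x hx => (Finset.mem_sdiff.mp (hTsub hx)).1
  have hdisj : Disjoint S T := by
    rw [Finset.disjoint_right]
    intro x hx
    exact (Finset.mem_sdiff.mp (hTsub hx)).2
  refine ⟨S ∪ T, Finset.union_subset hS hTIcc, Finset.subset_union_left, ?_, ?_⟩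
  · rw [Finset.card_union_of_disjoint hdisj, hScard, hTcard]; omega
  · intro k hk2 hkd
    have split : ∀ A : Finset ℕ, A ⊆ Finset.Icc 1 n →
        (A ∩ Finset.Icc 1 (2*k-2)).card + (A ∩ Finset.Icc (2*k-1) n).card = A.card := by
      intro A hA
      rw [← Finset.card_union_of_disjoint]
      · congr 1
        ext x
        simp only [Finset.mem_union, Finset.mem_inter, Finset.mem_Icc]
        constructor
        · rintro (⟨h, _⟩ | ⟨h, _⟩) <;> exact h
        · intro hx
          have hxI := Finset.mem_Icc.mp (hA hx)
          rcases le_or_gt x (2*k-2) with h | h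
          · exact Or.inl ⟨hx, hxI.1, h⟩
          · exact Or.inr ⟨hx, by omega, hxI.2⟩
      · rw [Finset.disjoint_left]
        intro x hx hx'
        have h1 := Finset.mem_Icc.mp (Finset.mem_inter.mp hx).2
        have h2 := Finset.mem_Icc.mp (Finset.mem_inter.mp hx').2
        omega
    have hMsplit : ((S ∪ T) ∩ Finset.Icc 1 (2*k-2)).card
        = (S ∩ Finset.Icc 1 (2*k-2)).card + (T ∩ Finset.Icc 1 (2*k-2)).card := by
      rw [Finset.union_inter_distrib_right, Finset.card_union_of_disjoint]
      exact hdisj.mono Finset.inter_subset_left Finset.inter_subset_left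
    by_cases hT1 : T ∩ Finset.Icc 1 (2*k-2) = ∅
    · rw [hMsplit, hT1, Finset.card_empty]
      have := hgood k hk2 hkd
      omega
    · obtain ⟨x, hx⟩ := Finset.nonempty_iff_ne_empty.mpr hT1
      have hxT := (Finset.mem_inter.mp hx).1
      have hxle : x ≤ 2*k-2 := (Finset.mem_Icc.mp (Finset.mem_inter.mp hx).2).2
      -- every element of Icc (2k-1) n not in S must be in T
      have hsub : Finset.Icc (2*k-1) n \ S ⊆ T := by
        intro y hy
        obtain ⟨hyI, hyS⟩ := Finset.mem_sdiff.mp hy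
        have hyIcc := Finset.mem_Icc.mp hyI
        by_contra hyT
        have : y ∈ C \ T := by
          rw [Finset.mem_sdiff, hC, Finset.mem_sdiff, Finset.mem_Icc]
          exact ⟨⟨⟨by omega, hyIcc.2⟩, hyS⟩, hyT⟩
        have := hTtop x hxT y this
        omega
      have hTI2 : T ∩ Finset.Icc (2*k-1) n = Finset.Icc (2*k-1) n \ S := by
        apply Finset.Subset.antisymm
        · intro y hy
          obtain ⟨hyT, hyI⟩ := Finset.mem_inter.mp hy
          rw [Finset.mem_sdiff]
          exact ⟨hyI, (Finset.mem_sdiff.mp (hTsub hyT)).2⟩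
        · intro y hy
          exact Finset.mem_inter.mpr ⟨hsub hy, (Finset.mem_sdiff.mp hy).1⟩
      have hI2card : (Finset.Icc (2*k-1) n).card = n - (2*k-1) + 1 := by
        rw [Nat.card_Icc]; omega
      have e3 : (T ∩ Finset.Icc (2*k-1) n).card + (S ∩ Finset.Icc (2*k-1) n).card
          = n - (2*k-1) + 1 := by
        rw [hTI2, Finset.inter_comm, ← hI2card]
        rw [Finset.card_sdiff_add_card_inter]
      have e1 := split S hS
      have e2 := split T hTIcc
      have e5 := hgood k hk2 hkd
      rw [hScard] at e1
      rw [hTcard] at e2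
      rw [hMsplit]
      omega
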